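/- In the Trimmed Graphical Lasso deterministic setting, under hypotheses (H1)–(H4) and assuming the off-diagonal support S of Θ* satisfies |S| ≤ k, the error matrix satisfies ‖Δ̃‖_{1,off} ≤ (5√(k+p) + 2τ1/λ)·‖Δ̃‖_F. (Conversion between the off-diagonal ℓ1 norm and the Frobenius norm of the error, established in the proof of Theorem 1.) -/

import Mathlib

open Matrix

/-- Trace inner product ⟨U,V⟩ = tr(U Vᵀ). -/
noncomputable def traceInner {p : ℕ} (U V : Matrix (Fin p) (Fin p) ℝ) : ℝ :=
  (U * Vᵀ).trace

/-- Frobenius norm. -/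
noncomputable def frobNorm {p : ℕ} (U : Matrix (Fin p) (Fin p) ℝ) : ℝ :=
  Real.sqrt (∑ i, ∑ j, (U i j) ^ 2)

/-- Entrywise ℓ1 norm: ‖U‖₁ = Σ_{i,j} |U_{ij}|. -/
noncomputable def l1Norm {p : ℕ} (U : Matrix (Fin p) (Fin p) ℝ) : ℝ :=
  ∑ i, ∑ j, |U i j|

/-- Off-diagonal entrywise ℓ1 norm: ‖U‖_{1,off} = Σ_{i≠j} |U_{ij}|. -/
noncomputable def offNorm {p : ℕ} (U : Matrix (Fin p) (Fin p) ℝ) : ℝ :=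
  ∑ ij ∈ Finset.univ.filter (fun ij : Fin p × Fin p => ij.1 ≠ ij.2), |U ij.1 ij.2|

/-- Entrywise sup norm: ‖U‖_∞ = max_{i,j} |U_{ij}|. -/
noncomputable def linfNorm {p : ℕ} (U : Matrix (Fin p) (Fin p) ℝ) : ℝ :=
  ⨆ ij : Fin p × Fin p, |U ij.1 ij.2|

lemma traceInner_eq_sum {p : ℕ} (U V : Matrix (Fin p) (Fin p) ℝ) :
    traceInner U V = ∑ i, ∑ j, U i j * V i j := by
  simp [traceInner, Matrix.trace, Matrix.mul_apply, Matrix.diag, Matrix.transpose_apply]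

lemma psd_trace_nonneg {p : ℕ} {M : Matrix (Fin p) (Fin p) ℝ} (hM : M.PosSemidef) :
    0 ≤ M.trace := by
  rw [Matrix.trace]
  refine Finset.sum_nonneg fun i _ => ?_
  exact hM.diag_nonneg

open scoped MatrixOrder in
lemma trace_mul_psd_nonneg {p : ℕ} {P Q : Matrix (Fin p) (Fin p) ℝ}
    (hP : P.PosSemidef) (hQ : Q.PosSemidef) : 0 ≤ (P * Q).trace := by
  have h1 : P * Q = P * CFC.sqrt Q * CFC.sqrt Q := by rw [mul_assoc, CFC.sqrt_mul_sqrt_self Q hQ.nonneg]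
  rw [h1, Matrix.trace_mul_cycle]
  have h2 : (CFC.sqrt Q * P * CFC.sqrt Q).PosSemidef := by
    have := hP.mul_mul_conjTranspose_same (CFC.sqrt Q)
    rwa [(CFC.sqrt_nonneg Q).posSemidef.isHermitian.eq] at this
  exact psd_trace_nonneg h2

lemma abs_le_linfNorm {p : ℕ} (M : Matrix (Fin p) (Fin p) ℝ) (i j : Fin p) :
    |M i j| ≤ linfNorm M :=
  le_ciSup (f := fun ij : Fin p × Fin p => |M ij.1 ij.2|) (Finite.bddAbove_range _) (i, j)

lemma abs_traceInner_le {p : ℕ} (M Δ : Matrix (Fin p) (Fin p) ℝ) :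
    |traceInner M Δ| ≤ linfNorm M * l1Norm Δ := by
  rw [traceInner_eq_sum]
  calc |∑ i, ∑ j, M i j * Δ i j| ≤ ∑ i, ∑ j, |M i j * Δ i j| := by
        refine (Finset.abs_sum_le_sum_abs _ _).trans (Finset.sum_le_sum fun i _ => ?_)
        exact Finset.abs_sum_le_sum_abs _ _
    _ ≤ ∑ i, ∑ j, linfNorm M * |Δ i j| := by
        refine Finset.sum_le_sum fun i _ => Finset.sum_le_sum fun j _ => ?_
        rw [abs_mul]
        exact mul_le_mul_of_nonneg_right (abs_le_linfNorm M i j) (abs_nonneg _)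
    _ = linfNorm M * l1Norm Δ := by
        rw [l1Norm, Finset.mul_sum]
        exact Finset.sum_congr rfl fun i _ => (Finset.mul_sum _ _ _).symm

lemma sum_abs_le_sqrt_card_mul_frob {p : ℕ} (Δ : Matrix (Fin p) (Fin p) ℝ)
    (T : Finset (Fin p × Fin p)) :
    ∑ ij ∈ T, |Δ ij.1 ij.2| ≤ Real.sqrt T.card * frobNorm Δ := by
  have h0 : 0 ≤ ∑ ij ∈ T, |Δ ij.1 ij.2| := Finset.sum_nonneg fun _ _ => abs_nonneg _
  have hsq : (∑ ij ∈ T, |Δ ij.1 ij.2|) ^ 2 ≤ T.card * ∑ ij ∈ T, |Δ ij.1 ij.2| ^ 2 :=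
    sq_sum_le_card_mul_sum_sq
  have h2 : ∑ ij ∈ T, |Δ ij.1 ij.2| ^ 2 ≤ ∑ i, ∑ j, (Δ i j) ^ 2 := by
    calc ∑ ij ∈ T, |Δ ij.1 ij.2| ^ 2 ≤ ∑ ij : Fin p × Fin p, |Δ ij.1 ij.2| ^ 2 :=
          Finset.sum_le_sum_of_subset_of_nonneg (Finset.subset_univ T)
            (fun _ _ _ => sq_nonneg _)
      _ = ∑ i, ∑ j, (Δ i j) ^ 2 := by
          rw [Fintype.sum_prod_type]
          simp [sq_abs]
  have h3 : (∑ ij ∈ T, |Δ ij.1 ij.2|) ^ 2 ≤ T.card * ∑ i, ∑ j, (Δ i j) ^ 2 := by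
    refine hsq.trans ?_
    exact mul_le_mul_of_nonneg_left h2 (Nat.cast_nonneg _)
  have h4 : ∑ ij ∈ T, |Δ ij.1 ij.2| ≤ Real.sqrt ((T.card : ℝ) * ∑ i, ∑ j, (Δ i j) ^ 2) := by
    rw [← Real.sqrt_sq h0]
    exact Real.sqrt_le_sqrt h3
  rwa [Real.sqrt_mul (Nat.cast_nonneg _), ← frobNorm] at h4

lemma diag_sum_le_sqrt_mul_frob {p : ℕ} (Δ : Matrix (Fin p) (Fin p) ℝ) :
    ∑ i, |Δ i i| ≤ Real.sqrt p * frobNorm Δ := by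
  have h0 : 0 ≤ ∑ i, |Δ i i| := Finset.sum_nonneg fun _ _ => abs_nonneg _
  have hsq : (∑ i, |Δ i i|) ^ 2 ≤ (Finset.univ : Finset (Fin p)).card * ∑ i, |Δ i i| ^ 2 :=
    sq_sum_le_card_mul_sum_sq
  have h2 : ∑ i, |Δ i i| ^ 2 ≤ ∑ i, ∑ j, (Δ i j) ^ 2 := by
    refine Finset.sum_le_sum fun i _ => ?_
    rw [sq_abs]
    exact Finset.single_le_sum (f := fun j => (Δ i j) ^ 2) (fun _ _ => sq_nonneg _)
      (Finset.mem_univ i)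
  have h3 : (∑ i, |Δ i i|) ^ 2 ≤ (p : ℝ) * ∑ i, ∑ j, (Δ i j) ^ 2 := by
    refine hsq.trans ?_
    simp only [Finset.card_univ, Fintype.card_fin]
    exact mul_le_mul_of_nonneg_left h2 (Nat.cast_nonneg _)
  have h4 : ∑ i, |Δ i i| ≤ Real.sqrt ((p : ℝ) * ∑ i, ∑ j, (Δ i j) ^ 2) := by
    rw [← Real.sqrt_sq h0]
    exact Real.sqrt_le_sqrt h3
  rwa [Real.sqrt_mul (Nat.cast_nonneg _), ← frobNorm] at h4

lemma traceInner_inv_sub_inv_nonneg {p : ℕ} {A B : Matrix (Fin p) (Fin p) ℝ}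
    (hA : A.PosDef) (hB : B.PosDef) : 0 ≤ traceInner (A⁻¹ - B⁻¹) (B - A) := by
  have hAu : IsUnit A.det := hA.det_pos.ne'.isUnit
  have hBu : IsUnit B.det := hB.det_pos.ne'.isUnit
  have hDt : (B - A)ᵀ = B - A := by
    rw [Matrix.transpose_sub, ← Matrix.conjTranspose_eq_transpose_of_trivial B,
      ← Matrix.conjTranspose_eq_transpose_of_trivial A, hB.isHermitian.eq, hA.isHermitian.eq]
  have hid : A⁻¹ - B⁻¹ = A⁻¹ * (B - A) * B⁻¹ := by
    rw [Matrix.mul_sub, Matrix.sub_mul, mul_assoc, Matrix.mul_nonsing_inv _ hBu, mul_one,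
      Matrix.nonsing_inv_mul _ hAu, one_mul]
  rw [traceInner, hDt, hid]
  have hQ : ((B - A) * B⁻¹ * (B - A)ᴴ).PosSemidef :=
    hB.inv.posSemidef.mul_mul_conjTranspose_same (B - A)
  rw [Matrix.conjTranspose_eq_transpose_of_trivial, hDt] at hQ
  have hassoc : A⁻¹ * (B - A) * B⁻¹ * (B - A) = A⁻¹ * ((B - A) * B⁻¹ * (B - A)) := by
    simp only [mul_assoc]
  rw [hassoc]
  exact trace_mul_psd_nonneg hA.inv.posSemidef hQ

/-- Conversion between the off-diagonal ℓ1 norm and the Frobenius norm of the error. -/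
theorem offNorm_le_frobNorm_conversion
    (p n h : ℕ) (hp : 0 < p) (hn : 0 < n) (hh : 0 < h)
    (x : Fin n → Fin p → ℝ)
    (Θstar Θtil : Matrix (Fin p) (Fin p) ℝ)
    (hΘstar : Θstar.PosDef) (hΘtil : Θtil.PosDef)
    (R : ℝ) (hR : 0 < R) (hΘstarR : l1Norm Θstar ≤ R) (hΘtilR : l1Norm Θtil ≤ R)
    (wtil wstar : Fin n → ℝ)
    (hwtil : ∀ i, wtil i ∈ Set.Icc (0 : ℝ) 1) (hwstar : ∀ i, wstar i ∈ Set.Icc (0 : ℝ) 1)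
    (κ τ₁ τ₂ lam : ℝ) (hκ : 0 < κ) (hτ₁ : 0 ≤ τ₁) (hτ₂ : 0 ≤ τ₂) (hlam : 0 < lam)
    (H1 : traceInner
        ((1 / (h : ℝ)) • ∑ i, wtil i • Matrix.vecMulVec (x i) (x i) - Θtil⁻¹)
        (Θtil - Θstar) ≤ lam * (offNorm Θstar - offNorm Θtil))
    (H2 : ∀ Δ : Matrix (Fin p) (Fin p) ℝ, Δ.IsSymm → (Θstar + Δ).PosDef →
        frobNorm Δ ≤ 1 →
        traceInner (Θstar⁻¹ - (Θstar + Δ)⁻¹) Δ ≥ κ * (frobNorm Δ) ^ 2)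
    (H3 : |traceInner
        ((1 / (h : ℝ)) • ∑ i, (wtil i - wstar i) • Matrix.vecMulVec (x i) (x i))
        (Θtil - Θstar)|
        ≤ τ₁ * frobNorm (Θtil - Θstar) + τ₂ * l1Norm (Θtil - Θstar))
    (H4a : 4 * max
        (linfNorm ((1 / (h : ℝ)) • ∑ i, wstar i • Matrix.vecMulVec (x i) (x i) - Θstar⁻¹))
        τ₂ ≤ lam)
    (H4b : lam ≤ (κ - τ₁) / (3 * R))
    (k : ℕ)
    (hk : (Finset.univ.filter
        (fun ij : Fin p × Fin p => ij.1 ≠ ij.2 ∧ Θstar ij.1 ij.2 ≠ 0)).card ≤ k) :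
    offNorm (Θtil - Θstar) ≤
      (5 * Real.sqrt ((k : ℝ) + p) + 2 * τ₁ / lam) * frobNorm (Θtil - Θstar) := by
  classical
  set Γt : Matrix (Fin p) (Fin p) ℝ :=
    (1 / (h : ℝ)) • ∑ i, wtil i • Matrix.vecMulVec (x i) (x i) with hΓt
  set Γs : Matrix (Fin p) (Fin p) ℝ :=
    (1 / (h : ℝ)) • ∑ i, wstar i • Matrix.vecMulVec (x i) (x i) with hΓs
  set ΓΔ : Matrix (Fin p) (Fin p) ℝ :=
    (1 / (h : ℝ)) • ∑ i, (wtil i - wstar i) • Matrix.vecMulVec (x i) (x i) with hΓΔ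
  set Δ : Matrix (Fin p) (Fin p) ℝ := Θtil - Θstar with hΔdef
  -- trace inner product is additive in the left argument
  have tI_sub : ∀ U V W : Matrix (Fin p) (Fin p) ℝ,
      traceInner (U - V) W = traceInner U W - traceInner V W := by
    intro U V W; simp [traceInner, Matrix.sub_mul]
  have tI_add : ∀ U V W : Matrix (Fin p) (Fin p) ℝ,
      traceInner (U + V) W = traceInner U W + traceInner V W := by
    intro U V W; simp [traceInner, Matrix.add_mul]
  have hΓdiff : ΓΔ = Γt - Γs := by
    rw [hΓΔ, hΓt, hΓs, ← smul_sub, ← Finset.sum_sub_distrib]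
    simp [sub_smul]
  have hsplit : traceInner (Γt - Θtil⁻¹) Δ =
      traceInner (Θstar⁻¹ - Θtil⁻¹) Δ + traceInner (Γs - Θstar⁻¹) Δ + traceInner ΓΔ Δ := by
    rw [hΓdiff]
    simp only [tI_sub]
    ring
  have hmono : 0 ≤ traceInner (Θstar⁻¹ - Θtil⁻¹) Δ := by
    rw [hΔdef]
    exact traceInner_inv_sub_inv_nonneg hΘstar hΘtil
  have hmain : traceInner (Γs - Θstar⁻¹) Δ + traceInner ΓΔ Δ ≤
      lam * (offNorm Θstar - offNorm Θtil) := by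
    rw [hsplit] at H1
    linarith
  -- bounds from H3 and H4
  have hlinf : 4 * linfNorm (Γs - Θstar⁻¹) ≤ lam := by
    have := le_max_left (linfNorm (Γs - Θstar⁻¹)) τ₂
    linarith
  have hτ₂lam : 4 * τ₂ ≤ lam := by
    have := le_max_right (linfNorm (Γs - Θstar⁻¹)) τ₂
    linarith
  have hl1nn : 0 ≤ l1Norm Δ := by
    refine Finset.sum_nonneg fun i _ => Finset.sum_nonneg fun j _ => abs_nonneg _
  have hfnn : 0 ≤ frobNorm Δ := Real.sqrt_nonneg _
  have hb1 : -(lam / 4 * l1Norm Δ) ≤ traceInner (Γs - Θstar⁻¹) Δ := by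
    have h1 := abs_traceInner_le (Γs - Θstar⁻¹) Δ
    have h2 : linfNorm (Γs - Θstar⁻¹) * l1Norm Δ ≤ lam / 4 * l1Norm Δ := by
      apply mul_le_mul_of_nonneg_right _ hl1nn
      linarith
    have := neg_abs_le (traceInner (Γs - Θstar⁻¹) Δ)
    linarith
  have hb2 : -(τ₁ * frobNorm Δ + lam / 4 * l1Norm Δ) ≤ traceInner ΓΔ Δ := by
    have h2 : τ₂ * l1Norm Δ ≤ lam / 4 * l1Norm Δ := by
      apply mul_le_mul_of_nonneg_right _ hl1nn
      linarith
    have := neg_abs_le (traceInner ΓΔ Δ)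
    linarith
  have K0 : 0 ≤ lam * (offNorm Θstar - offNorm Θtil) + lam / 2 * l1Norm Δ
      + τ₁ * frobNorm Δ := by linarith
  -- support decomposition
  set off : Finset (Fin p × Fin p) :=
    Finset.univ.filter (fun ij : Fin p × Fin p => ij.1 ≠ ij.2) with hoffdef
  set S : Finset (Fin p × Fin p) := off.filter (fun ij => Θstar ij.1 ij.2 ≠ 0) with hSdef
  set Sc : Finset (Fin p × Fin p) := off.filter (fun ij => ¬ Θstar ij.1 ij.2 ≠ 0) with hScdef
  set a : ℝ := ∑ ij ∈ S, |Δ ij.1 ij.2| with hadef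
  set b : ℝ := ∑ ij ∈ Sc, |Δ ij.1 ij.2| with hbdef
  set d : ℝ := ∑ i, |Δ i i| with hddef
  have hann : 0 ≤ a := Finset.sum_nonneg fun _ _ => abs_nonneg _
  have hbnn : 0 ≤ b := Finset.sum_nonneg fun _ _ => abs_nonneg _
  have hab : a + b = offNorm Δ := by
    rw [hadef, hbdef, hSdef, hScdef]
    exact Finset.sum_filter_add_sum_filter_not off _ _
  have hdiag : ∑ ij ∈ Finset.univ.filter (fun ij : Fin p × Fin p => ¬ ij.1 ≠ ij.2),
      |Δ ij.1 ij.2| = d := by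
    rw [hddef, Finset.sum_filter, Fintype.sum_prod_type]
    simp
  have hl1split : l1Norm Δ = offNorm Δ + d := by
    calc l1Norm Δ = ∑ ij : Fin p × Fin p, |Δ ij.1 ij.2| := by
          simp only [l1Norm]
          exact (Fintype.sum_prod_type (f := fun ij : Fin p × Fin p => |Δ ij.1 ij.2|)).symm
      _ = (∑ ij ∈ Finset.univ.filter (fun ij : Fin p × Fin p => ij.1 ≠ ij.2), |Δ ij.1 ij.2|)
          + ∑ ij ∈ Finset.univ.filter (fun ij : Fin p × Fin p => ¬ ij.1 ≠ ij.2),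
            |Δ ij.1 ij.2| := (Finset.sum_filter_add_sum_filter_not _ _ _).symm
      _ = offNorm Δ + d := by rw [hdiag]; rfl
  -- offNorm Θstar - offNorm Θtil ≤ a - b
  have hstar_split : offNorm Θstar = ∑ ij ∈ S, |Θstar ij.1 ij.2| + ∑ ij ∈ Sc, |Θstar ij.1 ij.2| :=
    (Finset.sum_filter_add_sum_filter_not off _ _).symm
  have htil_split : offNorm Θtil = ∑ ij ∈ S, |Θtil ij.1 ij.2| + ∑ ij ∈ Sc, |Θtil ij.1 ij.2| :=
    (Finset.sum_filter_add_sum_filter_not off _ _).symm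
  have hSc0 : ∀ ij ∈ Sc, Θstar ij.1 ij.2 = 0 := by
    intro ij hij
    simp only [hScdef, Finset.mem_filter, not_not] at hij
    exact hij.2
  have hScstar : ∑ ij ∈ Sc, |Θstar ij.1 ij.2| = 0 := by
    refine Finset.sum_eq_zero fun ij hij => ?_
    rw [hSc0 ij hij, abs_zero]
  have hSctil : ∑ ij ∈ Sc, |Θtil ij.1 ij.2| = b := by
    refine Finset.sum_congr rfl fun ij hij => ?_
    have : Δ ij.1 ij.2 = Θtil ij.1 ij.2 - Θstar ij.1 ij.2 := by rw [hΔdef]; simp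
    rw [this, hSc0 ij hij, sub_zero]
  have hSdiff : ∑ ij ∈ S, |Θstar ij.1 ij.2| - ∑ ij ∈ S, |Θtil ij.1 ij.2| ≤ a := by
    rw [hadef, ← Finset.sum_sub_distrib]
    refine Finset.sum_le_sum fun ij hij => ?_
    have h1 : |Θstar ij.1 ij.2| - |Θtil ij.1 ij.2| ≤ |Θstar ij.1 ij.2 - Θtil ij.1 ij.2| :=
      abs_sub_abs_le_abs_sub _ _
    have h2 : Δ ij.1 ij.2 = Θtil ij.1 ij.2 - Θstar ij.1 ij.2 := by rw [hΔdef]; simp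
    rw [h2, abs_sub_comm]
    exact h1
  have hoffdiff : offNorm Θstar - offNorm Θtil ≤ a - b := by
    rw [hstar_split, htil_split, hScstar, hSctil]
    linarith
  -- Cauchy-Schwarz bounds
  have hScard : (S.card : ℝ) ≤ (k : ℝ) := by
    have : S = Finset.univ.filter
        (fun ij : Fin p × Fin p => ij.1 ≠ ij.2 ∧ Θstar ij.1 ij.2 ≠ 0) := by
      rw [hSdef, hoffdef, Finset.filter_filter]
    rw [this]
    exact_mod_cast hk
  have hkp : (0:ℝ) ≤ (k : ℝ) + p := by positivity
  have ha : a ≤ Real.sqrt ((k : ℝ) + p) * frobNorm Δ := by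
    have h1 := sum_abs_le_sqrt_card_mul_frob Δ S
    have h2 : Real.sqrt (S.card : ℝ) ≤ Real.sqrt ((k : ℝ) + p) := by
      apply Real.sqrt_le_sqrt
      have : (0:ℝ) ≤ (p : ℝ) := Nat.cast_nonneg _
      linarith
    calc a ≤ Real.sqrt (S.card : ℝ) * frobNorm Δ := h1
      _ ≤ Real.sqrt ((k : ℝ) + p) * frobNorm Δ := mul_le_mul_of_nonneg_right h2 hfnn
  have hd : d ≤ Real.sqrt ((k : ℝ) + p) * frobNorm Δ := by
    have h1 := diag_sum_le_sqrt_mul_frob Δ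
    have h2 : Real.sqrt (p : ℝ) ≤ Real.sqrt ((k : ℝ) + p) := by
      apply Real.sqrt_le_sqrt
      have : (0:ℝ) ≤ (k : ℝ) := Nat.cast_nonneg _
      linarith
    calc d ≤ Real.sqrt (p : ℝ) * frobNorm Δ := h1
      _ ≤ Real.sqrt ((k : ℝ) + p) * frobNorm Δ := mul_le_mul_of_nonneg_right h2 hfnn
  -- final combination
  have K1 : 0 ≤ lam * a - lam * b + lam / 2 * a + lam / 2 * b + lam / 2 * d
      + τ₁ * frobNorm Δ := by
    have h1 : lam * (offNorm Θstar - offNorm Θtil) ≤ lam * (a - b) :=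
      mul_le_mul_of_nonneg_left hoffdiff hlam.le
    rw [hl1split, ← hab] at K0
    ring_nf at h1 K0 ⊢
    linarith
  rw [← hab]
  have hq : Real.sqrt ((k : ℝ) + p) * frobNorm Δ = Real.sqrt ((k : ℝ) + p) * frobNorm Δ := rfl
  have p1 : lam * a ≤ lam * (Real.sqrt ((k : ℝ) + p) * frobNorm Δ) :=
    mul_le_mul_of_nonneg_left ha hlam.le
  have p2 : lam * d ≤ lam * (Real.sqrt ((k : ℝ) + p) * frobNorm Δ) :=
    mul_le_mul_of_nonneg_left hd hlam.le
  have hexp : lam * ((5 * Real.sqrt ((k : ℝ) + p) + 2 * τ₁ / lam) * frobNorm Δ)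
      = 5 * (lam * (Real.sqrt ((k : ℝ) + p) * frobNorm Δ)) + 2 * τ₁ * frobNorm Δ := by
    field_simp
  have hfinal : lam * (a + b) ≤
      lam * ((5 * Real.sqrt ((k : ℝ) + p) + 2 * τ₁ / lam) * frobNorm Δ) := by
    rw [hexp]
    have e : lam * (a + b) = lam * a + lam * b := by ring
    rw [e]
    linarith [p1, p2, K1]
  exact le_of_mul_le_mul_left hfinal hlam
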